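/- Deterministic descent with disagreement penalty: let E be a real inner product space, let F_1,…,F_N : E → ℝ each be differentiable with L-Lipschitz gradient (L > 0), and set F = (1/N) ∑_i F_i. Let θ : Fin N → E, θ̄ = (1/N) ∑_i θ i, g = (1/N) ∑_i ∇F_i(θ i), and 0 < γ ≤ 1/L. Then F(θ̄ − γ • g) ≤ F(θ̄) − (γ/2) ‖∇F(θ̄)‖² + (γ L²/2) · (1/N) ∑_i ‖θ i − θ̄‖². -/

import Mathlib

open Finset

local notation "⟪" x ", " y "⟫" => @inner ℝ _ _ x y

/-- Descent lemma (quadratic upper bound) for a function with Lipschitz gradient. -/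
lemma descent_lemma {E : Type*} [NormedAddCommGroup E] [InnerProductSpace ℝ E]
    [CompleteSpace E] (f : E → ℝ) (f' : E → E)
    (h : ∀ x, HasGradientAt f (f' x) x) (L : ℝ) (hL : 0 ≤ L)
    (hlip : ∀ a b : E, ‖f' a - f' b‖ ≤ L * ‖a - b‖) (x y : E) :
    f y ≤ f x + ⟪f' x, y - x⟫ + L / 2 * ‖y - x‖ ^ 2 := by
  set v := y - x with hv
  set ψ : ℝ → ℝ := fun t => f (x + t • v) - t * ⟪f' x, v⟫ - L * t ^ 2 / 2 * ‖v‖ ^ 2 with hψ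
  have hc : ∀ t : ℝ, HasDerivAt (fun t : ℝ => x + t • v) v t := by
    intro t
    simpa using ((hasDerivAt_id t).smul_const v).const_add x
  have hψ' : ∀ t : ℝ, HasDerivAt ψ
      (⟪f' (x + t • v), v⟫ - ⟪f' x, v⟫ - L * t * ‖v‖ ^ 2) t := by
    intro t
    have h1 : HasDerivAt (fun t : ℝ => f (x + t • v)) ⟪f' (x + t • v), v⟫ t := by
      have := ((h (x + t • v)).hasFDerivAt).comp_hasDerivAt t (hc t)
      simpa [InnerProductSpace.toDual_apply_apply, Function.comp_def] using this
    have h2 : HasDerivAt (fun t : ℝ => t * ⟪f' x, v⟫) ⟪f' x, v⟫ t := by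
      simpa using (hasDerivAt_id t).mul_const ⟪f' x, v⟫
    have h3 : HasDerivAt (fun t : ℝ => L * t ^ 2 / 2 * ‖v‖ ^ 2) (L * t * ‖v‖ ^ 2) t := by
      have : HasDerivAt (fun t : ℝ => t ^ 2) (2 * t) t := by
        simpa using hasDerivAt_pow 2 t
      have := ((this.const_mul L).div_const 2).mul_const (‖v‖ ^ 2)
      exact this.congr_deriv (by ring)
    exact (h1.sub h2).sub h3
  have key : ψ 1 ≤ ψ 0 := by
    have hanti : AntitoneOn ψ (Set.Ici (0 : ℝ)) := by
      apply antitoneOn_of_deriv_nonpos (convex_Ici 0)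
      · exact fun t _ => (hψ' t).continuousAt.continuousWithinAt
      · exact fun t _ => (hψ' t).differentiableAt.differentiableWithinAt
      · intro t ht
        rw [interior_Ici] at ht
        rw [(hψ' t).deriv]
        have h4 : ⟪f' (x + t • v) - f' x, v⟫ ≤ L * t * ‖v‖ ^ 2 := by
          calc ⟪f' (x + t • v) - f' x, v⟫ ≤ ‖f' (x + t • v) - f' x‖ * ‖v‖ :=
                real_inner_le_norm _ _
            _ ≤ (L * ‖(x + t • v) - x‖) * ‖v‖ := by
                have := hlip (x + t • v) x
                exact mul_le_mul_of_nonneg_right this (norm_nonneg _)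
            _ = L * t * ‖v‖ ^ 2 := by
                rw [add_sub_cancel_left, norm_smul, Real.norm_eq_abs,
                  abs_of_pos ht.out]
                ring
        have := inner_sub_left (𝕜 := ℝ) (f' (x + t • v)) (f' x) v
        nlinarith [h4, this]
    exact hanti (by norm_num) (by norm_num) (by norm_num)
  have h0 : ψ 0 = f x := by simp [hψ]
  have h1 : ψ 1 = f y - ⟪f' x, v⟫ - L / 2 * ‖v‖ ^ 2 := by
    simp [hψ, hv]
  rw [h0, h1] at key
  linarith

set_option maxHeartbeats 1000000 in
/-- **Deterministic descent with disagreement penalty.**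
Each client objective `F i` is differentiable with `L`-Lipschitz gradient
`F' i`; `F̄ = (1/N) ∑ i, F i` is the average objective (with gradient
`(1/N) • ∑ i, F' i`), `θ̄` is the average parameter, and
`g = (1/N) • ∑ i, F' i (θ i)` the averaged local gradient.  Then one step of
size `0 < γ ≤ 1/L` from `θ̄` along `g` decreases `F̄` up to a penalty
proportional to the disagreement `(1/N) ∑ i, ‖θ i − θ̄‖²`. -/
theorem deterministic_descent_with_disagreement
    (E : Type*) [NormedAddCommGroup E] [InnerProductSpace ℝ E] [CompleteSpace E]
    (N : ℕ) (L : ℝ) (hL : 0 < L)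
    (F : Fin N → E → ℝ) (F' : Fin N → E → E)
    (hgrad : ∀ i x, HasGradientAt (F i) (F' i x) x)
    (hlip : ∀ i (a b : E), ‖F' i a - F' i b‖ ≤ L * ‖a - b‖)
    (θ : Fin N → E) (θbar g : E)
    (hθbar : θbar = ((1 : ℝ) / N) • ∑ i : Fin N, θ i)
    (hg : g = ((1 : ℝ) / N) • ∑ i : Fin N, F' i (θ i))
    (γ : ℝ) (hγ0 : 0 < γ) (hγL : γ ≤ 1 / L) :
    ((1 : ℝ) / N) * ∑ i : Fin N, F i (θbar - γ • g)
      ≤ ((1 : ℝ) / N) * ∑ i : Fin N, F i θbar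
        - (γ / 2) * ‖((1 : ℝ) / N) • ∑ i : Fin N, F' i θbar‖ ^ 2
        + (γ * L ^ 2 / 2) * (((1 : ℝ) / N) * ∑ i : Fin N, ‖θ i - θbar‖ ^ 2) := by
  rcases Nat.eq_zero_or_pos N with hN | hN
  · subst hN
    simp
  have hNpos : (0 : ℝ) < N := by exact_mod_cast hN
  set c : ℝ := (1 : ℝ) / N with hc
  have hcpos : 0 < c := by positivity
  -- average objective and gradient
  set Fbar : E → ℝ := fun x => c * ∑ i : Fin N, F i x with hFbar
  set G : E → E := fun x => c • ∑ i : Fin N, F' i x with hG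
  have hGgrad : ∀ x, HasGradientAt Fbar (G x) x := by
    intro x
    rw [hasGradientAt_iff_hasFDerivAt]
    have hsum : HasFDerivAt (fun y => ∑ i : Fin N, F i y)
        (∑ i : Fin N, (InnerProductSpace.toDual ℝ E (F' i x) : E →L[ℝ] ℝ)) x :=
      HasFDerivAt.fun_sum fun i _ => (hgrad i x).hasFDerivAt
    have h2 := hsum.const_smul c
    have hdual : (InnerProductSpace.toDual ℝ E (G x) : E →L[ℝ] ℝ)
        = c • ∑ i : Fin N, (InnerProductSpace.toDual ℝ E (F' i x) : E →L[ℝ] ℝ) := by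
      have hGx : G x = c • ∑ i : Fin N, F' i x := rfl
      rw [hGx, map_smul, map_sum]
    rw [hdual]
    have hFbx : Fbar = fun y => c • ∑ i : Fin N, F i y := by
      ext y; simp [hFbar, smul_eq_mul]
    rw [hFbx]
    exact h2
  have hGlip : ∀ a b : E, ‖G a - G b‖ ≤ L * ‖a - b‖ := by
    intro a b
    have : G a - G b = c • ∑ i : Fin N, (F' i a - F' i b) := by
      simp [hG, Finset.smul_sum, Finset.sum_sub_distrib, smul_sub]
    rw [this, norm_smul, Real.norm_eq_abs, abs_of_pos hcpos]
    calc c * ‖∑ i : Fin N, (F' i a - F' i b)‖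
        ≤ c * ∑ i : Fin N, ‖F' i a - F' i b‖ :=
          mul_le_mul_of_nonneg_left (norm_sum_le _ _) hcpos.le
      _ ≤ c * ∑ i : Fin N, L * ‖a - b‖ := by
          apply mul_le_mul_of_nonneg_left _ hcpos.le
          exact Finset.sum_le_sum fun i _ => hlip i a b
      _ = L * ‖a - b‖ := by
          rw [Finset.sum_const, Finset.card_univ, Fintype.card_fin, nsmul_eq_mul]
          have hcN : c * N = 1 := by rw [hc]; exact one_div_mul_cancel hNpos.ne'
          linear_combination (L * ‖a - b‖) * hcN
  -- apply the descent lemma at x = θbar, y = θbar - γ • g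
  have hdesc := descent_lemma Fbar G hGgrad L hL.le hGlip θbar (θbar - γ • g)
  have hyx : θbar - γ • g - θbar = -(γ • g) := by abel
  rw [hyx] at hdesc
  have hd2 : Fbar (θbar - γ • g)
      ≤ Fbar θbar - γ * ⟪G θbar, g⟫ + L / 2 * (γ ^ 2 * ‖g‖ ^ 2) := by
    have e1 : ⟪G θbar, -(γ • g)⟫ = -(γ * ⟪G θbar, g⟫) := by
      rw [inner_neg_right, real_inner_smul_right]
    have e2 : ‖-(γ • g)‖ ^ 2 = γ ^ 2 * ‖g‖ ^ 2 := by
      rw [norm_neg, norm_smul, Real.norm_eq_abs, mul_pow, sq_abs]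
    rw [e1, e2] at hdesc
    linarith
  -- polarization
  have hpol : ⟪G θbar, g⟫
      = (‖G θbar‖ ^ 2 + ‖g‖ ^ 2 - ‖G θbar - g‖ ^ 2) / 2 := by
    have := norm_sub_sq_real (G θbar) g
    linarith
  -- bound on ‖G θbar - g‖²
  have hvar : ‖G θbar - g‖ ^ 2 ≤ L ^ 2 * (c * ∑ i : Fin N, ‖θ i - θbar‖ ^ 2) := by
    have hdiff : G θbar - g = c • ∑ i : Fin N, (F' i θbar - F' i (θ i)) := by
      simp [hG, hg, Finset.smul_sum, Finset.sum_sub_distrib, smul_sub]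
    rw [hdiff, norm_smul, Real.norm_eq_abs, abs_of_pos hcpos, mul_pow]
    have step1 : ‖∑ i : Fin N, (F' i θbar - F' i (θ i))‖
        ≤ ∑ i : Fin N, ‖F' i θbar - F' i (θ i)‖ := norm_sum_le _ _
    have step2 : (∑ i : Fin N, ‖F' i θbar - F' i (θ i)‖) ^ 2
        ≤ N * ∑ i : Fin N, ‖F' i θbar - F' i (θ i)‖ ^ 2 := by
      have := sq_sum_le_card_mul_sum_sq
        (s := Finset.univ) (f := fun i : Fin N => ‖F' i θbar - F' i (θ i)‖)
      simpa using this
    have step3 : ∑ i : Fin N, ‖F' i θbar - F' i (θ i)‖ ^ 2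
        ≤ ∑ i : Fin N, L ^ 2 * ‖θ i - θbar‖ ^ 2 := by
      apply Finset.sum_le_sum
      intro i _
      have h := hlip i θbar (θ i)
      have : ‖F' i θbar - F' i (θ i)‖ ^ 2 ≤ (L * ‖θbar - θ i‖) ^ 2 := by
        apply sq_le_sq' _ h
        nlinarith [norm_nonneg (F' i θbar - F' i (θ i))]
      calc ‖F' i θbar - F' i (θ i)‖ ^ 2 ≤ (L * ‖θbar - θ i‖) ^ 2 := this
        _ = L ^ 2 * ‖θ i - θbar‖ ^ 2 := by rw [norm_sub_rev]; ring
    have hns : ‖∑ i : Fin N, (F' i θbar - F' i (θ i))‖ ^ 2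
        ≤ N * ∑ i : Fin N, L ^ 2 * ‖θ i - θbar‖ ^ 2 := by
      have h1 : ‖∑ i : Fin N, (F' i θbar - F' i (θ i))‖ ^ 2
          ≤ (∑ i : Fin N, ‖F' i θbar - F' i (θ i)‖) ^ 2 := by
        apply sq_le_sq' _ step1
        nlinarith [norm_nonneg (∑ i : Fin N, (F' i θbar - F' i (θ i)))]
      calc ‖∑ i : Fin N, (F' i θbar - F' i (θ i))‖ ^ 2
          ≤ (∑ i : Fin N, ‖F' i θbar - F' i (θ i)‖) ^ 2 := h1
        _ ≤ N * ∑ i : Fin N, ‖F' i θbar - F' i (θ i)‖ ^ 2 := step2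
        _ ≤ N * ∑ i : Fin N, L ^ 2 * ‖θ i - θbar‖ ^ 2 :=
            mul_le_mul_of_nonneg_left step3 (by positivity)
    calc c ^ 2 * ‖∑ i : Fin N, (F' i θbar - F' i (θ i))‖ ^ 2
        ≤ c ^ 2 * (N * ∑ i : Fin N, L ^ 2 * ‖θ i - θbar‖ ^ 2) :=
          mul_le_mul_of_nonneg_left hns (by positivity)
      _ = L ^ 2 * (c * ∑ i : Fin N, ‖θ i - θbar‖ ^ 2) := by
          rw [Finset.mul_sum, Finset.mul_sum, Finset.mul_sum]
          rw [Finset.mul_sum]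
          apply Finset.sum_congr rfl
          intro i _
          have hcN : c * N = 1 := by rw [hc]; exact one_div_mul_cancel hNpos.ne'
          linear_combination (L ^ 2 * ‖θ i - θbar‖ ^ 2 * c) * hcN
  -- γ L ≤ 1
  have hγLle : γ * L ≤ 1 := by
    rw [le_div_iff₀ hL] at hγL
    exact hγL
  have hGθ : G θbar = c • ∑ i : Fin N, F' i θbar := rfl
  have hFb1 : Fbar (θbar - γ • g) = c * ∑ i : Fin N, F i (θbar - γ • g) := rfl
  have hFb2 : Fbar θbar = c * ∑ i : Fin N, F i θbar := rfl
  rw [← hFb1, ← hFb2, ← hGθ]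
  have h5 : γ / 2 * ‖G θbar - g‖ ^ 2 ≤ γ / 2 * (L ^ 2 * (c * ∑ i : Fin N, ‖θ i - θbar‖ ^ 2)) :=
    mul_le_mul_of_nonneg_left hvar (by positivity)
  nlinarith [hd2, hpol, h5, sq_nonneg ‖g‖,
    mul_nonneg (mul_nonneg hγ0.le (sub_nonneg.mpr hγLle)) (sq_nonneg ‖g‖)]
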